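/- For odd n = 2k+1 with k ≥ 2, define h = 2(s_k - 1) and weights a_0 = a_1 = a_2 = 1, a_{2i-1} = h/(2 s_{k+1-i}) and a_{2i} = h/s_{k+1-i} for 2 ≤ i ≤ k-1, a_{n-2} = h/6, a_{n-1} = h/4, a_n = h/3, where s_j is the Sylvester sequence. Then a_0 + a_1 + ... + a_n = h. -/
import Mathlib


def sylvester : ℕ → ℕ
  | 0 => 2
  | n + 1 => sylvester n * (sylvester n - 1) + 1

lemma sylvester_two_le (k : ℕ) : 2 ≤ sylvester k := by
  induction k with
  | zero => simp [sylvester]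
  | succ k ih =>
    show 2 ≤ sylvester k * (sylvester k - 1) + 1
    have : 1 ≤ sylvester k * (sylvester k - 1) :=
      Nat.one_le_iff_ne_zero.2 (Nat.mul_ne_zero (by omega) (by omega))
    omega

lemma sylvester_sub_one (k : ℕ) :
    sylvester (k + 1) - 1 = sylvester k * (sylvester k - 1) := by
  show sylvester k * (sylvester k - 1) + 1 - 1 = _
  omega

lemma sylvester_prod (k : ℕ) :
    sylvester k - 1 = ∏ j ∈ Finset.range k, sylvester j := by
  induction k with
  | zero => simp [sylvester]
  | succ k ih =>
    rw [Finset.prod_range_succ, ← ih, sylvester_sub_one, Nat.mul_comm]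

lemma sylvester_dvd {j k : ℕ} (hj : j < k) : sylvester j ∣ sylvester k - 1 := by
  rw [sylvester_prod]
  exact Finset.dvd_prod_of_mem _ (Finset.mem_range.2 hj)

lemma sylvester_div_sum (k : ℕ) :
    ∑ j ∈ Finset.range k, (sylvester k - 1) / sylvester j = sylvester k - 2 := by
  induction k with
  | zero => simp [sylvester]
  | succ k ih =>
    have hs := sylvester_two_le k
    have h1 : ∀ j ∈ Finset.range k,
        (sylvester (k+1) - 1) / sylvester j
          = sylvester k * ((sylvester k - 1) / sylvester j) := by
      intro j hj
      rw [sylvester_sub_one]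
      exact Nat.mul_div_assoc _ (sylvester_dvd (Finset.mem_range.1 hj))
    rw [Finset.sum_range_succ, Finset.sum_congr rfl h1, ← Finset.mul_sum, ih,
      sylvester_sub_one, Nat.mul_div_cancel_left _ (by omega : 0 < sylvester k)]
    have e0 : sylvester (k+1) = sylvester k * (sylvester k - 1) + 1 := rfl
    have e1 : sylvester k * (sylvester k - 1) = sylvester k * (sylvester k - 2) + sylvester k := by
      have : sylvester k - 1 = (sylvester k - 2) + 1 := by omega
      rw [this, Nat.mul_add, Nat.mul_one]
    omega

lemma pair_sum (f : ℕ → ℕ) (m : ℕ) :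
    ∑ j ∈ Finset.Ico 3 (2*m+3), f j
      = ∑ i ∈ Finset.Ico 2 (m+2), (f (2*i-1) + f (2*i)) := by
  induction m with
  | zero => simp
  | succ m ih =>
    have hR : ∑ i ∈ Finset.Ico 2 (m+1+2), (f (2*i-1) + f (2*i))
        = ∑ i ∈ Finset.Ico 2 (m+2), (f (2*i-1) + f (2*i)) + (f (2*m+3) + f (2*m+4)) := by
      rw [show m+1+2 = (m+2)+1 by ring, Finset.sum_Ico_succ_top (by omega),
        show 2*(m+2)-1 = 2*m+3 by omega, show 2*(m+2) = 2*m+4 by omega]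
    rw [hR, ← ih, show 2*(m+1)+3 = ((2*m+3)+1)+1 by ring,
      Finset.sum_Ico_succ_top (by omega), Finset.sum_Ico_succ_top (by omega),
      show (2*m+3)+1 = 2*m+4 by ring]
    ring

theorem large_volume_weights_sum (k : ℕ) (hk : 2 ≤ k)
    (n : ℕ) (hn : n = 2 * k + 1)
    (h : ℕ) (hh : h = 2 * (sylvester k - 1))
    (a : ℕ → ℕ)
    (ha012 : ∀ j ≤ 2, a j = 1)
    (haodd : ∀ i, 2 ≤ i → i ≤ k - 1 → a (2 * i - 1) = h / (2 * sylvester (k + 1 - i)))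
    (haeven : ∀ i, 2 ≤ i → i ≤ k - 1 → a (2 * i) = h / sylvester (k + 1 - i))
    (han2 : a (n - 2) = h / 6)
    (han1 : a (n - 1) = h / 4)
    (han : a n = h / 3) :
    ∑ j ∈ Finset.range (n + 1), a j = h := by
  subst hn
  have hs2 : (2:ℕ) ≤ sylvester k := sylvester_two_le k
  set P := sylvester k - 1 with hP
  have h2P : (2:ℕ) ∣ P := by
    have := sylvester_dvd (show 0 < k by omega)
    simpa [sylvester] using this
  have h3P : (3:ℕ) ∣ P := by
    have := sylvester_dvd (show 1 < k by omega)
    have h31 : sylvester 1 = 3 := by norm_num [sylvester]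
    rwa [h31] at this
  have h6P : (6:ℕ) ∣ P := Nat.Coprime.mul_dvd_of_dvd_of_dvd (by norm_num) h2P h3P
  obtain ⟨Q, hQ⟩ := h6P
  -- split the big sum
  rw [Finset.range_eq_Ico,
    ← Finset.sum_Ico_consecutive a (show (0:ℕ) ≤ 2*k-1 by omega) (show 2*k-1 ≤ 2*k+1+1 by omega),
    ← Finset.sum_Ico_consecutive a (show (0:ℕ) ≤ 3 by omega) (show 3 ≤ 2*k-1 by omega)]
  have hfirst : ∑ j ∈ Finset.Ico 0 3, a j = 3 := by
    rw [← Finset.range_eq_Ico]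
    simp [Finset.sum_range_succ, ha012 0 (by omega), ha012 1 (by omega), ha012 2 (by omega)]
  have hlast : ∑ j ∈ Finset.Ico (2*k-1) (2*k+1+1), a j = h/6 + h/4 + h/3 := by
    rw [show 2*k+1+1 = ((2*k-1)+1+1)+1 by omega, Finset.sum_Ico_succ_top (by omega),
      Finset.sum_Ico_succ_top (by omega), Finset.sum_Ico_succ_top (by omega),
      Finset.Ico_self, Finset.sum_empty]
    have e2 : a (2*k-1) = h/6 := by rw [show 2*k-1 = 2*k+1-2 by omega]; exact han2
    have e3 : a (2*k-1+1) = h/4 := by rw [show 2*k-1+1 = 2*k+1-1 by omega]; exact han1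
    have e4 : a ((2*k-1+1)+1) = h/3 := by rw [show (2*k-1+1)+1 = 2*k+1 by omega]; exact han
    rw [e2, e3, e4]; ring
  have hmid : ∑ j ∈ Finset.Ico 3 (2*k-1), a j
      = ∑ i ∈ Finset.Ico 2 k, 3 * (P / sylvester (k+1-i)) := by
    rw [show 2*k-1 = 2*(k-2)+3 by omega, pair_sum, show k-2+2 = k by omega]
    refine Finset.sum_congr rfl ?_
    intro i hi
    have hi' := Finset.mem_Ico.1 hi
    have hdvd : sylvester (k+1-i) ∣ P := sylvester_dvd (by omega)
    rw [haodd i hi'.1 (by omega), haeven i hi'.1 (by omega), hh]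
    rw [Nat.mul_div_mul_left _ _ (by norm_num : 0 < 2),
      Nat.mul_div_assoc _ hdvd]
    ring
  rw [hfirst, hlast, hmid, ← Finset.mul_sum]
  -- reindex the middle sum
  have hreindex : ∑ i ∈ Finset.Ico 2 k, P / sylvester (k+1-i)
      = ∑ j ∈ Finset.Ico 2 k, P / sylvester j := by
    refine Finset.sum_nbij' (fun i => k+1-i) (fun j => k+1-j) ?_ ?_ ?_ ?_ ?_
    · intro i hi; simp only [Finset.mem_Ico] at hi ⊢; omega
    · intro j hj; simp only [Finset.mem_Ico] at hj ⊢; omega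
    · intro i hi; simp only [Finset.mem_Ico] at hi; show k+1-(k+1-i) = i; omega
    · intro j hj; simp only [Finset.mem_Ico] at hj; show k+1-(k+1-j) = j; omega
    · intro i hi; rfl
  rw [hreindex]
  -- the key identity
  have hkey : P/2 + P/3 + ∑ j ∈ Finset.Ico 2 k, P / sylvester j = sylvester k - 2 := by
    have := sylvester_div_sum k
    rw [Finset.range_eq_Ico,
      ← Finset.sum_Ico_consecutive (fun j => P / sylvester j) (show (0:ℕ) ≤ 2 by omega)
        (show 2 ≤ k by omega)] at this
    have hfirst2 : ∑ j ∈ Finset.Ico 0 2, P / sylvester j = P/2 + P/3 := by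
      rw [← Finset.range_eq_Ico]
      have h0 : sylvester 0 = 2 := rfl
      have h1 : sylvester 1 = 3 := by norm_num [sylvester]
      simp [Finset.sum_range_succ, h0, h1]
    rw [hfirst2] at this
    omega
  omega
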